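/- Let (X,d) be a proper metric space and m : X×X → X a midpoint map for (X,d). Let 𝔉 denote the set of nonempty compact subsets of X, endowed with the Hausdorff metric d_H. Then the map 𝔐̃ : 𝔉 × 𝔉 → 𝔉 defined by 𝔐̃(A,B) := N_{d_H(A,B)/2}(A) ∩ N_{d_H(A,B)/2}(B) is a midpoint map for (𝔉, d_H); in particular 𝔐̃(A,B) is a nonempty compact subset of X and d_H(A, 𝔐̃(A,B)) = d_H(A,B)/2 = d_H(B, 𝔐̃(A,B)) for all A,B ∈ 𝔉. -/

import Mathlib

open Metric Set TopologicalSpace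

variable {X : Type*}

/-- A geodesic segment from `x` to `y`, parametrized by arclength on `[0, dist x y]`. -/
def IsGeodesicSegment [MetricSpace X] (γ : ℝ → X) (x y : X) : Prop :=
  γ 0 = x ∧ γ (dist x y) = y ∧
    ∀ s ∈ Set.Icc (0 : ℝ) (dist x y), ∀ t ∈ Set.Icc (0 : ℝ) (dist x y),
      dist (γ s) (γ t) = |s - t|

/-- A metric space is geodesic if any two points are joined by a geodesic segment. -/
def IsGeodesicSpace (X : Type*) [MetricSpace X] : Prop :=
  ∀ x y : X, ∃ γ : ℝ → X, IsGeodesicSegment γ x y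

/-- A metric space is uniquely geodesic if any two points are joined by a geodesic
segment, which is moreover unique (as a parametrized segment). -/
def IsUniquelyGeodesic (X : Type*) [MetricSpace X] : Prop :=
  ∀ x y : X, (∃ γ : ℝ → X, IsGeodesicSegment γ x y) ∧
    ∀ γ γ' : ℝ → X, IsGeodesicSegment γ x y → IsGeodesicSegment γ' x y →
      ∀ t ∈ Set.Icc (0 : ℝ) (dist x y), γ t = γ' t

/-- Geodesic completeness: every geodesic segment extends to a full geodesic line,
i.e. an isometric embedding of `ℝ`. -/
def IsGeodesicallyComplete (X : Type*) [MetricSpace X] : Prop :=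
  ∀ (x y : X) (γ : ℝ → X), IsGeodesicSegment γ x y →
    ∃ γ' : ℝ → X, Isometry γ' ∧ γ '' Set.Icc (0 : ℝ) (dist x y) ⊆ Set.range γ'

/-- Geodesics do not split: the image of the bi-infinite geodesic extension of every
nondegenerate geodesic segment is unique. -/
def GeodesicsDoNotSplit (X : Type*) [MetricSpace X] : Prop :=
  ∀ (x y : X) (γ : ℝ → X), IsGeodesicSegment γ x y → x ≠ y →
    ∀ γ₁ γ₂ : ℝ → X, Isometry γ₁ → Isometry γ₂ →
      γ '' Set.Icc (0 : ℝ) (dist x y) ⊆ Set.range γ₁ →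
      γ '' Set.Icc (0 : ℝ) (dist x y) ⊆ Set.range γ₂ →
      Set.range γ₁ = Set.range γ₂

/-- A subset is (geodesically) convex if with any two of its points it contains
the image of every geodesic segment joining them. -/
def IsGeodConvex [MetricSpace X] (C : Set X) : Prop :=
  ∀ a ∈ C, ∀ b ∈ C, ∀ γ : ℝ → X, IsGeodesicSegment γ a b →
    γ '' Set.Icc (0 : ℝ) (dist a b) ⊆ C

/-- A midpoint map on a metric space: a symmetric map `m` with
`d(m(x,y),x) = d(x,y)/2 = d(m(x,y),y)`. -/
def IsMidpointMap [MetricSpace X] (m : X → X → X) : Prop :=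
  (∀ x y, m x y = m y x) ∧
    ∀ x y, dist (m x y) x = dist x y / 2 ∧ dist (m x y) y = dist x y / 2

/-- A convex midpoint map:
`d(m(x₁,y₁), m(x₂,y₂)) ≤ (d(x₁,x₂) + d(y₁,y₂))/2` for all points. -/
def IsConvexMidpointMap [MetricSpace X] (m : X → X → X) : Prop :=
  IsMidpointMap m ∧
    ∀ x₁ x₂ y₁ y₂ : X, dist (m x₁ y₁) (m x₂ y₂) ≤ (dist x₁ x₂ + dist y₁ y₂) / 2

/-- The space `𝒞(X,d)` of nonempty convex compact subsets of `X`, endowed with the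
Hausdorff metric (as a subtype of `NonemptyCompacts X`, whose metric is the
Hausdorff distance). -/
abbrev ConvexCompacts (X : Type*) [MetricSpace X] :=
  {A : NonemptyCompacts X // IsGeodConvex (A : Set X)}

lemma isGeodConvex_singleton [MetricSpace X] (p : X) : IsGeodConvex ({p} : Set X) := by
  rintro a ha b hb γ hγ x ⟨t, ht, rfl⟩
  rw [Set.mem_singleton_iff] at ha hb
  subst ha; subst hb
  rw [dist_self] at ht
  have : t = 0 := le_antisymm ht.2 ht.1
  subst this
  exact hγ.1

/-- The singleton `{p}` as an element of `𝒞(X,d)`. -/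
def singletonCC [MetricSpace X] (p : X) : ConvexCompacts X :=
  ⟨⟨⟨{p}, isCompact_singleton⟩, Set.singleton_nonempty p⟩, isGeodConvex_singleton p⟩

/-- The singleton `{p}` as an element of `𝔉(X,d)`, the space of nonempty compact
subsets of `X` with the Hausdorff metric. -/
def singletonNC [MetricSpace X] (p : X) : NonemptyCompacts X :=
  ⟨⟨{p}, isCompact_singleton⟩, Set.singleton_nonempty p⟩

/-- The closed `r`-neighborhood `N_r(A) = {x | ∃ a ∈ A, d(a,x) ≤ r}` of a set. -/
def closedNbhd [MetricSpace X] (r : ℝ) (A : Set X) : Set X :=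
  {x : X | ∃ a ∈ A, dist a x ≤ r}

/-- A set is `m`-convex if it contains the `m`-midpoint of each pair of its points. -/
def MConvexSet [MetricSpace X] (m : X → X → X) (A : Set X) : Prop :=
  ∀ a ∈ A, ∀ a' ∈ A, m a a' ∈ A

/-- The `m`-convex hull: the intersection of all closed `m`-convex sets containing `A`. -/
def mConvexHull [MetricSpace X] (m : X → X → X) (A : Set X) : Set X :=
  ⋂₀ {C : Set X | IsClosed C ∧ MConvexSet m C ∧ A ⊆ C}

lemma closedNbhd_isCompact [MetricSpace X] [ProperSpace X] {A : Set X} (hA : IsCompact A)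
    (hAne : A.Nonempty) {r : ℝ} (hr : 0 ≤ r) : IsCompact (closedNbhd r A) := by
  have heq : closedNbhd r A = {x | infDist x A ≤ r} := by
    ext x
    constructor
    · rintro ⟨a, ha, h⟩
      exact le_trans (infDist_le_dist_of_mem ha) (by rwa [dist_comm])
    · intro hx
      obtain ⟨a, ha, hd⟩ := hA.exists_infDist_eq_dist hAne x
      exact ⟨a, ha, by rw [dist_comm, ← hd]; exact hx⟩
  rw [heq, Metric.isCompact_iff_isClosed_bounded]
  refine ⟨isClosed_le (continuous_infDist_pt A) continuous_const, ?_⟩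
  obtain ⟨a0, ha0⟩ := id hAne
  obtain ⟨R, hR⟩ := hA.isBounded.subset_closedBall a0
  apply (Metric.isBounded_closedBall (x := a0) (r := R + r)).subset
  intro x hx
  obtain ⟨a, ha, hd⟩ := hA.exists_infDist_eq_dist hAne x
  have h1 : dist x a ≤ r := by rw [← hd]; exact hx
  have h2 : dist a a0 ≤ R := by simpa [Metric.mem_closedBall] using hR ha
  simp only [Metric.mem_closedBall]
  calc dist x a0 ≤ dist x a + dist a a0 := dist_triangle _ _ _
  _ ≤ r + R := add_le_add h1 h2
  _ = R + r := add_comm _ _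

/-- **Proposition 2.11.** For a midpoint map `m` on a proper metric space `(X,d)`,
the map `𝔐̃(A,B) := N_{d_H(A,B)/2}(A) ∩ N_{d_H(A,B)/2}(B)` is a midpoint map on the
set `𝔉(X,d)` of nonempty compact subsets of `X`, with respect to the Hausdorff
distance. -/
theorem frakMtilde_midpointMap_on_compacts [MetricSpace X] [ProperSpace X]
    (m : X → X → X) (hm : IsMidpointMap m) :
    ∀ A B : Set X, A.Nonempty → IsCompact A → B.Nonempty → IsCompact B →
      let MAB := closedNbhd (hausdorffDist A B / 2) A ∩ closedNbhd (hausdorffDist A B / 2) B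
      (MAB.Nonempty ∧ IsCompact MAB) ∧
      hausdorffDist A MAB = hausdorffDist A B / 2 ∧
      hausdorffDist B MAB = hausdorffDist A B / 2 := by
  intro A B hAne hAc hBne hBc
  dsimp only
  set r := hausdorffDist A B / 2 with hr
  have hr0 : 0 ≤ r := by
    have := hausdorffDist_nonneg (s := A) (t := B); rw [hr]; linarith
  have hEAB : EMetric.hausdorffEdist A B ≠ ⊤ :=
    Metric.hausdorffEdist_ne_top_of_nonempty_of_bounded hAne hBne hAc.isBounded hBc.isBounded
  have hEBA : EMetric.hausdorffEdist B A ≠ ⊤ := by show hausdorffEDist B A ≠ ⊤; rwa [hausdorffEDist_comm]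
  have key : ∀ a ∈ A, ∃ p ∈ closedNbhd r A ∩ closedNbhd r B, dist a p ≤ r := by
    intro a ha
    obtain ⟨b, hb, hd⟩ := hBc.exists_infDist_eq_dist hBne a
    have hdab : dist a b ≤ 2 * r := by
      rw [← hd, hr]; have := infDist_le_hausdorffDist_of_mem ha hEAB; linarith
    refine ⟨m a b, ⟨⟨a, ha, ?_⟩, ⟨b, hb, ?_⟩⟩, ?_⟩
    · rw [dist_comm, (hm.2 a b).1]; linarith
    · rw [dist_comm, (hm.2 a b).2]; linarith
    · rw [dist_comm, (hm.2 a b).1]; linarith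
  have key' : ∀ b ∈ B, ∃ p ∈ closedNbhd r A ∩ closedNbhd r B, dist b p ≤ r := by
    intro b hb
    obtain ⟨a, ha, hd⟩ := hAc.exists_infDist_eq_dist hAne b
    have hdab : dist a b ≤ 2 * r := by
      rw [dist_comm, ← hd, hr]
      have := infDist_le_hausdorffDist_of_mem hb hEBA
      rw [hausdorffDist_comm] at this; linarith
    refine ⟨m a b, ⟨⟨a, ha, ?_⟩, ⟨b, hb, ?_⟩⟩, ?_⟩
    · rw [dist_comm, (hm.2 a b).1]; linarith
    · rw [dist_comm, (hm.2 a b).2]; linarith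
    · rw [dist_comm, (hm.2 a b).2]; linarith
  obtain ⟨a0, ha0⟩ := id hAne
  obtain ⟨p0, hp0, _⟩ := key a0 ha0
  have hMne : (closedNbhd r A ∩ closedNbhd r B).Nonempty := ⟨p0, hp0⟩
  have hMc : IsCompact (closedNbhd r A ∩ closedNbhd r B) :=
    (closedNbhd_isCompact hAc ⟨a0, ha0⟩ hr0).inter_right
      (closedNbhd_isCompact hBc hBne hr0).isClosed
  have hEAM : EMetric.hausdorffEdist A (closedNbhd r A ∩ closedNbhd r B) ≠ ⊤ :=
    Metric.hausdorffEdist_ne_top_of_nonempty_of_bounded ⟨a0, ha0⟩ hMne hAc.isBounded hMc.isBounded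
  have hAM_le : hausdorffDist A (closedNbhd r A ∩ closedNbhd r B) ≤ r := by
    apply hausdorffDist_le_of_infDist hr0
    · intro a ha
      obtain ⟨p, hp, hd⟩ := key a ha
      exact le_trans (infDist_le_dist_of_mem hp) hd
    · rintro x ⟨⟨a, ha, hax⟩, -⟩
      exact le_trans (infDist_le_dist_of_mem ha) (by rwa [dist_comm])
  have hBM_le : hausdorffDist B (closedNbhd r A ∩ closedNbhd r B) ≤ r := by
    apply hausdorffDist_le_of_infDist hr0
    · intro b hb
      obtain ⟨p, hp, hd⟩ := key' b hb
      exact le_trans (infDist_le_dist_of_mem hp) hd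
    · rintro x ⟨-, ⟨b, hb, hbx⟩⟩
      exact le_trans (infDist_le_dist_of_mem hb) (by rwa [dist_comm])
  have htri : hausdorffDist A B ≤ hausdorffDist A (closedNbhd r A ∩ closedNbhd r B)
      + hausdorffDist (closedNbhd r A ∩ closedNbhd r B) B :=
    hausdorffDist_triangle hEAM
  rw [hausdorffDist_comm (s := closedNbhd r A ∩ closedNbhd r B) (t := B)] at htri
  have h2r : hausdorffDist A B = 2 * r := by rw [hr]; ring
  refine ⟨⟨hMne, hMc⟩, ?_, ?_⟩
  · linarith
  · linarith
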